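/- Smoothing preserves smoothness (Technical Lemma C). Let F : ℝ^d → ℝ be H_F-smooth. Then for every μ > 0 the function u ↦ F(x+μ·u) is γ-integrable for each x, and the Gaussian smoothed function F_μ(x) := ∫ F(x+μ·u) dγ(u) is H_F-smooth, i.e., F_μ is differentiable on ℝ^d and its gradient ∇F_μ is H_F-Lipschitz. -/

import Mathlib

open MeasureTheory ProbabilityTheory Real InnerProductSpace

/-- The standard Gaussian measure on `EuclideanSpace ℝ (Fin d)`, i.e. the `d`-fold
product of the standard Gaussian measure `N(0,1)` on `ℝ`. -/
noncomputable def stdGaussian (d : ℕ) : Measure (EuclideanSpace ℝ (Fin d)) :=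
  (Measure.pi fun _ : Fin d => gaussianReal 0 1).map
    (MeasurableEquiv.toLp 2 (Fin d → ℝ))

instance stdGaussian_isProb (d : ℕ) : IsProbabilityMeasure (stdGaussian d) :=
  Measure.isProbabilityMeasure_map (MeasurableEquiv.measurable _).aemeasurable

lemma integrable_sq_gaussian : Integrable (fun x : ℝ => x ^ 2) (gaussianReal 0 1) := by
  rw [gaussianReal_of_var_ne_zero 0 one_ne_zero,
    integrable_withDensity_iff (measurable_gaussianPDF 0 1)
      (ae_of_all _ fun x => ENNReal.ofReal_lt_top)]
  have h := (integrable_rpow_mul_exp_neg_mul_sq (b := 1/2) (by norm_num)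
    (s := (2:ℝ)) (by norm_num)).const_mul ((Real.sqrt (2 * π * 1))⁻¹)
  refine h.congr (ae_of_all _ fun x => ?_)
  show (√(2 * π * 1))⁻¹ * (x ^ (2:ℝ) * rexp (-(1/2) * x ^ 2))
      = x ^ 2 * (ENNReal.ofReal (gaussianPDFReal 0 1 x)).toReal
  rw [ENNReal.toReal_ofReal (gaussianPDFReal_nonneg 0 1 x), gaussianPDFReal,
    show ((x:ℝ) ^ (2:ℝ) = x ^ 2) by
      rw [show ((2:ℝ) = ((2:ℕ):ℝ)) by norm_num, Real.rpow_natCast]]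
  push_cast
  rw [show (-(1/2) * x ^ 2 : ℝ) = -(x - 0)^2 / (2*1) by ring]
  ring

lemma map_eval_pi {ι : Type*} [Fintype ι] {α : ι → Type*} [∀ i, MeasurableSpace (α i)]
    (μ : ∀ i, Measure (α i)) [∀ i, IsProbabilityMeasure (μ i)] (i : ι) :
    (Measure.pi μ).map (Function.eval i) = μ i := by
  ext s hs
  classical
  rw [Measure.map_apply (measurable_pi_apply i) hs, Set.eval_preimage, Measure.pi_pi]
  rw [Finset.prod_eq_single i (fun j _ hj => by
    simp [Function.update_of_ne hj]) (by simp)]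
  simp

lemma integrable_coord_sq (d : ℕ) (i : Fin d) :
    Integrable (fun y : Fin d → ℝ => (y i) ^ 2)
      (Measure.pi fun _ : Fin d => gaussianReal 0 1) := by
  have hmap := map_eval_pi (fun _ : Fin d => gaussianReal 0 1) i
  have h := integrable_sq_gaussian
  rw [← hmap] at h
  exact (integrable_map_measure
    ((measurable_id.pow_const 2).aestronglyMeasurable)
    (measurable_pi_apply i).aemeasurable).mp h

lemma integrable_normSq_stdGaussian (d : ℕ) :
    Integrable (fun u : EuclideanSpace ℝ (Fin d) => ‖u‖ ^ 2) (stdGaussian d) := by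
  rw [_root_.stdGaussian, integrable_map_equiv (MeasurableEquiv.toLp 2 (Fin d → ℝ)) _]
  have h := integrable_finset_sum (μ := Measure.pi fun _ : Fin d => gaussianReal 0 1)
    Finset.univ (fun i _ => integrable_coord_sq d i)
  refine h.congr (ae_of_all _ fun y => ?_)
  show ∑ i, (y i) ^ 2 = ‖(MeasurableEquiv.toLp 2 (Fin d → ℝ)) y‖ ^ 2
  rw [EuclideanSpace.norm_eq, Real.sq_sqrt (by positivity)]
  simp [sq_abs]

lemma integrable_norm_stdGaussian (d : ℕ) :
    Integrable (fun u : EuclideanSpace ℝ (Fin d) => ‖u‖) (stdGaussian d) := by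
  refine ((integrable_const 1).add (integrable_normSq_stdGaussian d)).mono'
    continuous_norm.aestronglyMeasurable (ae_of_all _ fun u => ?_)
  show ‖‖u‖‖ ≤ 1 + ‖u‖ ^ 2
  rw [norm_norm]
  nlinarith [norm_nonneg u]

lemma taylor_quad_bound {d : ℕ} (F : EuclideanSpace ℝ (Fin d) → ℝ)
    (hFdiff : Differentiable ℝ F) {H : ℝ} (hH : 0 ≤ H)
    (hLip : LipschitzWith H.toNNReal (gradient F)) (a b : EuclideanSpace ℝ (Fin d)) :
    |F b - F a - (inner ℝ (gradient F a) (b - a) : ℝ)| ≤ H * ‖b - a‖ ^ 2 := by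
  set L := toDual ℝ (EuclideanSpace ℝ (Fin d)) (gradient F a) with hL
  have hgrad : ∀ z w : EuclideanSpace ℝ (Fin d),
      ‖gradient F z - gradient F w‖ ≤ H * ‖z - w‖ := by
    intro z w
    have := hLip.dist_le_mul z w
    rwa [dist_eq_norm, dist_eq_norm, Real.coe_toNNReal _ hH] at this
  have hfd : ∀ z, HasFDerivAt (fun y => F y - L y)
      (toDual ℝ _ (gradient F z) - L) z := by
    intro z
    exact ((hFdiff z).hasGradientAt.hasFDerivAt).sub (L.hasFDerivAt)
  have key : ∀ z ∈ segment ℝ a b, ‖toDual ℝ _ (gradient F z) - L‖ ≤ H * ‖b - a‖ := by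
    intro z hz
    rw [hL, ← map_sub, LinearIsometryEquiv.norm_map]
    refine (hgrad z a).trans (mul_le_mul_of_nonneg_left ?_ hH)
    obtain ⟨s, t, hs, ht, hst, rfl⟩ := hz
    have h1 : s • a + t • b - a = t • (b - a) := by
      have : s = 1 - t := by linarith
      subst this
      rw [smul_sub]
      module
    rw [h1, norm_smul, Real.norm_eq_abs, abs_of_nonneg ht]
    nlinarith [norm_nonneg (b - a)]
  have hmv := (convex_segment a b).norm_image_sub_le_of_norm_hasFDerivWithin_le
    (fun z _ => (hfd z).hasFDerivWithinAt) key
    (left_mem_segment ℝ a b) (right_mem_segment ℝ a b)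
  have hLba : L b - L a = (inner ℝ (gradient F a) (b - a) : ℝ) := by
    rw [hL]; simp [toDual_apply_apply, inner_sub_right]
  calc |F b - F a - (inner ℝ (gradient F a) (b - a) : ℝ)|
      = ‖(F b - L b) - (F a - L a)‖ := by rw [Real.norm_eq_abs, ← hLba]; ring_nf
    _ ≤ H * ‖b - a‖ * ‖b - a‖ := hmv
    _ = H * ‖b - a‖ ^ 2 := by ring

/-- Gaussian smoothing preserves smoothness (Technical Lemma C). -/
theorem smoothing_preserves_smoothness
    (d : ℕ) (hd : 0 < d)
    (F : EuclideanSpace ℝ (Fin d) → ℝ)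
    (H_F : ℝ) (hH_F : 0 ≤ H_F)
    (hFdiff : Differentiable ℝ F)
    (hFgradLip : LipschitzWith H_F.toNNReal (gradient F))
    (μ : ℝ) (hμ : 0 < μ)
    (Fμ : EuclideanSpace ℝ (Fin d) → ℝ)
    (hFμ : ∀ y, Fμ y = ∫ u, F (y + μ • u) ∂(stdGaussian d)) :
    (∀ x : EuclideanSpace ℝ (Fin d),
        Integrable (fun u => F (x + μ • u)) (stdGaussian d)) ∧
      Differentiable ℝ Fμ ∧ LipschitzWith H_F.toNNReal (gradient Fμ) := by
  set γ := stdGaussian d with hγ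
  haveI : IsProbabilityMeasure γ := stdGaussian_isProb d
  have hnormSq := integrable_normSq_stdGaussian d
  have hnorm := integrable_norm_stdGaussian d
  have hgrad : ∀ z w : EuclideanSpace ℝ (Fin d),
      ‖gradient F z - gradient F w‖ ≤ H_F * ‖z - w‖ := by
    intro z w
    have := hFgradLip.dist_le_mul z w
    rwa [dist_eq_norm, dist_eq_norm, Real.coe_toNNReal _ hH_F] at this
  have hcontG : Continuous (gradient F) := hFgradLip.continuous
  have hshift : ∀ x : EuclideanSpace ℝ (Fin d),
      Continuous (fun u : EuclideanSpace ℝ (Fin d) => x + μ • u) :=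
    fun x => continuous_const.add (continuous_id.const_smul μ)
  have hμnorm : ∀ u : EuclideanSpace ℝ (Fin d), ‖μ • u‖ = μ * ‖u‖ := by
    intro u; rw [norm_smul, Real.norm_eq_abs, abs_of_pos hμ]
  have hdiff : ∀ x u : EuclideanSpace ℝ (Fin d), x + μ • u - x = μ • u := by
    intro x u; abel
  -- integrability of F (x + μ • u)
  have intF : ∀ x : EuclideanSpace ℝ (Fin d),
      Integrable (fun u => F (x + μ • u)) γ := by
    intro x
    refine (((integrable_const (|F x|)).add
        ((hnorm.const_mul (‖gradient F x‖ * μ)))).add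
        ((hnormSq.const_mul (H_F * μ ^ 2)))).mono'
      ((hFdiff.continuous.comp (hshift x)).aestronglyMeasurable)
      (ae_of_all _ fun u => ?_)
    have ht := taylor_quad_bound F hFdiff hH_F hFgradLip x (x + μ • u)
    rw [hdiff x u] at ht
    have hi : |(inner ℝ (gradient F x) (μ • u) : ℝ)| ≤ ‖gradient F x‖ * (μ * ‖u‖) := by
      refine (abs_real_inner_le_norm _ _).trans ?_
      rw [hμnorm u]
    rw [Real.norm_eq_abs]
    have h3 : |F (x + μ • u)|
        ≤ |F x| + |(inner ℝ (gradient F x) (μ • u) : ℝ)|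
          + |F (x + μ • u) - F x - (inner ℝ (gradient F x) (μ • u) : ℝ)| := by
      have := abs_add_le (F x + (inner ℝ (gradient F x) (μ • u) : ℝ))
        (F (x + μ • u) - F x - (inner ℝ (gradient F x) (μ • u) : ℝ))
      have h4 := abs_add_le (F x) ((inner ℝ (gradient F x) (μ • u) : ℝ))
      calc |F (x + μ • u)| = |(F x + (inner ℝ (gradient F x) (μ • u) : ℝ))
            + (F (x + μ • u) - F x - (inner ℝ (gradient F x) (μ • u) : ℝ))| := by ring_nf
        _ ≤ _ := this
        _ ≤ _ := by linarith
    rw [hμnorm u] at ht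
    calc |F (x + μ • u)| ≤ |F x| + ‖gradient F x‖ * (μ * ‖u‖) + H_F * (μ * ‖u‖) ^ 2 := by
          linarith
      _ = |F x| + ‖gradient F x‖ * μ * ‖u‖ + H_F * μ ^ 2 * ‖u‖ ^ 2 := by ring
  -- integrability of the gradient
  have intG : ∀ x : EuclideanSpace ℝ (Fin d),
      Integrable (fun u => gradient F (x + μ • u)) γ := by
    intro x
    refine ((integrable_const ‖gradient F x‖).add
        (hnorm.const_mul (H_F * μ))).mono'
      ((hcontG.comp (hshift x)).aestronglyMeasurable)
      (ae_of_all _ fun u => ?_)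
    calc ‖gradient F (x + μ • u)‖
        ≤ ‖gradient F x‖ + ‖gradient F (x + μ • u) - gradient F x‖ :=
          norm_le_insert' _ _
      _ ≤ ‖gradient F x‖ + H_F * μ * ‖u‖ := by
          have := hgrad (x + μ • u) x
          rw [hdiff x u, hμnorm u] at this
          linarith [this]
  set G : EuclideanSpace ℝ (Fin d) → EuclideanSpace ℝ (Fin d) :=
    fun x => ∫ u, gradient F (x + μ • u) ∂γ with hG
  have hInner : ∀ x v, (inner ℝ (G x) v : ℝ)
      = ∫ u, (inner ℝ (gradient F (x + μ • u)) v : ℝ) ∂γ := by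
    intro x v
    rw [real_inner_comm]
    calc (inner ℝ v (G x) : ℝ)
        = ∫ u, (inner ℝ v (gradient F (x + μ • u)) : ℝ) ∂γ := (integral_inner (intG x) v).symm
      _ = ∫ u, (inner ℝ (gradient F (x + μ • u)) v : ℝ) ∂γ :=
          integral_congr_ae (ae_of_all _ fun u => real_inner_comm _ _)
  have keyEst : ∀ x y, |Fμ y - Fμ x - (inner ℝ (G x) (y - x) : ℝ)| ≤ H_F * ‖y - x‖ ^ 2 := by
    intro x y
    have hintInner : Integrable
        (fun u => (inner ℝ (gradient F (x + μ • u)) (y - x) : ℝ)) γ := by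
      have h := (innerSL ℝ (y - x)).integrable_comp (intG x)
      refine h.congr (ae_of_all _ fun u => ?_)
      simp only [innerSL_apply_apply]
      exact real_inner_comm _ _
    have hsub2 : Integrable (fun u => F (y + μ • u) - F (x + μ • u)) γ :=
      (intF y).sub (intF x)
    have heq : Fμ y - Fμ x - (inner ℝ (G x) (y - x) : ℝ)
        = ∫ u, (F (y + μ • u) - F (x + μ • u)
            - (inner ℝ (gradient F (x + μ • u)) (y - x) : ℝ)) ∂γ := by
      rw [hFμ y, hFμ x, hInner x (y - x), ← integral_sub (intF y) (intF x),
        ← integral_sub hsub2 hintInner]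
    rw [heq]
    have hb : ∀ u, ‖F (y + μ • u) - F (x + μ • u)
        - (inner ℝ (gradient F (x + μ • u)) (y - x) : ℝ)‖ ≤ H_F * ‖y - x‖ ^ 2 := by
      intro u
      have ht := taylor_quad_bound F hFdiff hH_F hFgradLip (x + μ • u) (y + μ • u)
      have h5 : y + μ • u - (x + μ • u) = y - x := by abel
      rw [h5] at ht
      rw [Real.norm_eq_abs]
      exact ht
    calc |∫ u, (F (y + μ • u) - F (x + μ • u)
            - (inner ℝ (gradient F (x + μ • u)) (y - x) : ℝ)) ∂γ|
        ≤ ∫ _u, H_F * ‖y - x‖ ^ 2 ∂γ :=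
          norm_integral_le_of_norm_le (integrable_const (H_F * ‖y - x‖ ^ 2))
            (ae_of_all _ hb)
      _ = H_F * ‖y - x‖ ^ 2 := by simp [measure_univ]
  have hasGrad : ∀ x, HasGradientAt Fμ (G x) x := by
    intro x
    rw [hasGradientAt_iff_hasFDerivAt]
    refine HasFDerivAt.of_isLittleO ?_
    rw [Asymptotics.isLittleO_iff]
    intro c hc
    rw [Metric.eventually_nhds_iff]
    refine ⟨c / (H_F + 1), by positivity, fun y hy => ?_⟩
    have h1 := keyEst x y
    have h2 : (toDual ℝ (EuclideanSpace ℝ (Fin d)) (G x)) (y - x)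
        = (inner ℝ (G x) (y - x) : ℝ) := by simp
    rw [Real.norm_eq_abs, h2]
    have h3 : ‖y - x‖ < c / (H_F + 1) := by
      rw [← dist_eq_norm]; exact hy
    have h4 : ‖y - x‖ ≥ 0 := norm_nonneg _
    have h6 : H_F * ‖y - x‖ ^ 2 ≤ c * ‖y - x‖ := by
      rcases eq_or_lt_of_le h4 with h7 | h7
      · rw [← h7]; simp
      · have : H_F * ‖y - x‖ ≤ c := by
          have : H_F * ‖y - x‖ < H_F * (c / (H_F + 1)) + c / (H_F + 1) := by
            nlinarith
          have h8 : H_F * (c / (H_F + 1)) + c / (H_F + 1) = c := by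
            field_simp
          linarith
        nlinarith
    calc |Fμ y - Fμ x - (inner ℝ (G x) (y - x) : ℝ)| ≤ H_F * ‖y - x‖ ^ 2 := h1
      _ ≤ c * ‖y - x‖ := h6
      _ = c * ‖(fun y => y - x) y‖ := rfl
  refine ⟨intF, fun x => ((hasGrad x).hasFDerivAt).differentiableAt, ?_⟩
  have hgFμ : gradient Fμ = G := funext fun x => (hasGrad x).gradient
  rw [hgFμ]
  refine LipschitzWith.of_dist_le_mul fun x y => ?_
  rw [dist_eq_norm, dist_eq_norm, Real.coe_toNNReal _ hH_F]
  have hsub : G x - G y = ∫ u, (gradient F (x + μ • u) - gradient F (y + μ • u)) ∂γ :=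
    (integral_sub (intG x) (intG y)).symm
  rw [hsub]
  have hb : ∀ u, ‖gradient F (x + μ • u) - gradient F (y + μ • u)‖ ≤ H_F * ‖x - y‖ := by
    intro u
    have := hgrad (x + μ • u) (y + μ • u)
    have h5 : x + μ • u - (y + μ • u) = x - y := by abel
    rwa [h5] at this
  calc ‖∫ u, (gradient F (x + μ • u) - gradient F (y + μ • u)) ∂γ‖
      ≤ ∫ _u, H_F * ‖x - y‖ ∂γ :=
        norm_integral_le_of_norm_le (integrable_const (H_F * ‖x - y‖)) (ae_of_all _ hb)
    _ = H_F * ‖x - y‖ := by simp [measure_univ]
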